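/- arXiv:2307.13556 — 5 statements merged into one kernel-verified Lean document; each statement's English description precedes it below -/
import Mathlib

section
/- Let a be a real number with −1/2 < a ≤ 0, let ρ(s) = √(1/2 − a·cos(2s)), and let φ(s) = √(1/4 − a²) · ∫₀ˢ dt / ((1/2 − a·cos(2t))·√(1/2 + a·cos(2t))). Define Φ : ℝ² → ℝ⁴ by Φ(s, θ) = ( ρ(s)·cos φ(s), ρ(s)·sin φ(s), √(1 − ρ(s)²)·cos θ, √(1 − ρ(s)²)·sin θ ). Then for all (s, θ) ∈ ℝ²: (i) ‖Φ(s, θ)‖ = 1, i.e. Φ maps into the unit sphere S³ ⊂ ℝ⁴; (ii) ‖∂ₛΦ(s, θ)‖² = 1; (iii) ⟨∂ₛΦ(s, θ), ∂_θΦ(s, θ)⟩ = 0; (iv) ‖∂_θΦ(s, θ)‖² = 1 − ρ(s)². -/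
open Real

/-- Profile function of the do Carmo–Dajczer rotational minimal annuli. -/
noncomputable def dcdRho (a s : ℝ) : ℝ := Real.sqrt (1/2 - a * Real.cos (2*s))

/-- Angle function of the do Carmo–Dajczer parametrization. -/
noncomputable def dcdPhiAngle (a s : ℝ) : ℝ :=
  Real.sqrt (1/4 - a^2) *
    ∫ t in (0:ℝ)..s,
      1 / ((1/2 - a * Real.cos (2*t)) * Real.sqrt (1/2 + a * Real.cos (2*t)))

/-- The do Carmo–Dajczer parametrization `Φ : ℝ² → ℝ⁴`. -/
noncomputable def dcdPhi (a s θ : ℝ) : EuclideanSpace ℝ (Fin 4) :=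
  WithLp.toLp 2 ![dcdRho a s * Real.cos (dcdPhiAngle a s),
    dcdRho a s * Real.sin (dcdPhiAngle a s),
    Real.sqrt (1 - (dcdRho a s)^2) * Real.cos θ,
    Real.sqrt (1 - (dcdRho a s)^2) * Real.sin θ]

lemma hasDerivAt_euclidean4 {f : ℝ → EuclideanSpace ℝ (Fin 4)} {f' : EuclideanSpace ℝ (Fin 4)} {x : ℝ}
    (h : ∀ i, HasDerivAt (fun t => f t i) (f' i) x) : HasDerivAt f f' x := by
  set e := PiLp.continuousLinearEquiv 2 ℝ (fun _ : Fin 4 => ℝ)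
  have hpi : HasDerivAt (fun t => e (f t)) (e f') x := hasDerivAt_pi.mpr h
  exact (e.symm.hasFDerivAt.comp_hasDerivAt x hpi :)

lemma norm_sq_euclidean4 (v : EuclideanSpace ℝ (Fin 4)) :
    ‖v‖^2 = v 0^2 + v 1^2 + v 2^2 + v 3^2 := by
  rw [EuclideanSpace.norm_eq, Real.sq_sqrt (by positivity)]
  simp [Fin.sum_univ_four, sq_abs]

lemma inner_euclidean4 (v w : EuclideanSpace ℝ (Fin 4)) :
    (inner ℝ v w : ℝ) = v 0 * w 0 + v 1 * w 1 + v 2 * w 2 + v 3 * w 3 := by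
  simp [PiLp.inner_apply, RCLike.inner_apply, Fin.sum_univ_four]; ring

lemma keylem (x y z b G H : ℝ) (hx : x ≠ 0) (hy : y ≠ 0) (hG : G ≠ 0)
    (e1 : x^2 = G) (e2 : y^2 = H) (e3 : z^2 = G*H - b^2) (e4 : G + H = 1) :
    (b/x)^2 + G*(z*(1/(G*y)))^2 + (-b/y)^2 = 1 := by
  subst e1 e2
  field_simp
  linear_combination e3 + b^2*e4

set_option maxHeartbeats 2000000 in
/-- `Φ` maps into the unit sphere `S³` and the induced metric is
`ds² + (1 − ρ(s)²)dθ²`. -/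
theorem stmt5 (a : ℝ) (ha : -(1/2) < a) (ha' : a ≤ 0) (s θ : ℝ) :
    ‖dcdPhi a s θ‖ = 1 ∧
    ‖deriv (fun s' : ℝ => dcdPhi a s' θ) s‖^2 = 1 ∧
    (inner ℝ (deriv (fun s' : ℝ => dcdPhi a s' θ) s)
      (deriv (fun θ' : ℝ => dcdPhi a s θ') θ) : ℝ) = 0 ∧
    ‖deriv (fun θ' : ℝ => dcdPhi a s θ') θ‖^2 = 1 - (dcdRho a s)^2 := by
  have hGt : ∀ t : ℝ, (0:ℝ) < 1/2 - a * Real.cos (2*t) := fun t => by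
    nlinarith [Real.neg_one_le_cos (2*t), Real.cos_le_one (2*t)]
  have hHt : ∀ t : ℝ, (0:ℝ) < 1/2 + a * Real.cos (2*t) := fun t => by
    nlinarith [Real.neg_one_le_cos (2*t), Real.cos_le_one (2*t)]
  have hG := hGt s; have hH := hHt s
  have hgd : HasDerivAt (fun t : ℝ => 1/2 - a * Real.cos (2*t)) (a * Real.sin (2*s) * 2) s := by
    have h1 : HasDerivAt (fun t : ℝ => 2*t) 2 s := by
      simpa using (hasDerivAt_id s).const_mul (2:ℝ)
    have h2 := ((Real.hasDerivAt_cos (2*s)).comp s h1).const_mul a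
    have h3 := (hasDerivAt_const s (1/2:ℝ)).sub h2
    exact h3.congr_deriv (by ring)
  have hhd : HasDerivAt (fun t : ℝ => 1/2 + a * Real.cos (2*t)) (-(a * Real.sin (2*s) * 2)) s := by
    have h1 : HasDerivAt (fun t : ℝ => 2*t) 2 s := by
      simpa using (hasDerivAt_id s).const_mul (2:ℝ)
    have h2 := ((Real.hasDerivAt_cos (2*s)).comp s h1).const_mul a
    have h3 := (hasDerivAt_const s (1/2:ℝ)).add h2
    exact h3.congr_deriv (by ring)
  have hsg : (0:ℝ) < Real.sqrt (1/2 - a*Real.cos (2*s)) := Real.sqrt_pos.mpr hG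
  have hsh : (0:ℝ) < Real.sqrt (1/2 + a*Real.cos (2*s)) := Real.sqrt_pos.mpr hH
  have e1 : Real.sqrt (1/2 - a*Real.cos (2*s))^2 = 1/2 - a*Real.cos (2*s) := Real.sq_sqrt hG.le
  have e2 : Real.sqrt (1/2 + a*Real.cos (2*s))^2 = 1/2 + a*Real.cos (2*s) := Real.sq_sqrt hH.le
  have e3 : Real.sqrt (1/4 - a^2)^2 = 1/4 - a^2 := Real.sq_sqrt (by nlinarith)
  have hsub : ∀ t : ℝ, Real.sqrt (1 - (dcdRho a t)^2) = Real.sqrt (1/2 + a * Real.cos (2*t)) := by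
    intro t
    rw [show (1:ℝ) - (dcdRho a t)^2 = 1/2 + a * Real.cos (2*t) from by
      rw [dcdRho, Real.sq_sqrt (hGt t).le]; ring]
  have hρ : HasDerivAt (dcdRho a) (a * Real.sin (2*s) / Real.sqrt (1/2 - a*Real.cos (2*s))) s := by
    have := (Real.hasDerivAt_sqrt (ne_of_gt hG)).comp s hgd
    unfold dcdRho
    exact this.congr_deriv (by field_simp)
  have hr : HasDerivAt (fun t => Real.sqrt (1/2 + a * Real.cos (2*t)))
      (-(a * Real.sin (2*s)) / Real.sqrt (1/2 + a*Real.cos (2*s))) s := by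
    have := (Real.hasDerivAt_sqrt (ne_of_gt hH)).comp s hhd
    exact this.congr_deriv (by field_simp)
  have hcont : Continuous (fun t : ℝ => 1 / ((1/2 - a * Real.cos (2*t)) * Real.sqrt (1/2 + a * Real.cos (2*t)))) := by
    apply Continuous.div continuous_const
    · fun_prop
    · intro t
      exact (mul_pos (hGt t) (Real.sqrt_pos.mpr (hHt t))).ne'
  have hφ : HasDerivAt (dcdPhiAngle a)
      (Real.sqrt (1/4 - a^2) * (1/((1/2 - a*Real.cos (2*s)) * Real.sqrt (1/2 + a*Real.cos (2*s))))) s := by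
    unfold dcdPhiAngle
    exact ((hcont.integral_hasStrictDerivAt 0 s).hasDerivAt).const_mul _
  set ρ' := a * Real.sin (2*s) / Real.sqrt (1/2 - a*Real.cos (2*s)) with hρ'def
  set φ' := Real.sqrt (1/4 - a^2) * (1/((1/2 - a*Real.cos (2*s)) * Real.sqrt (1/2 + a*Real.cos (2*s)))) with hφ'def
  set r' := -(a * Real.sin (2*s)) / Real.sqrt (1/2 + a*Real.cos (2*s)) with hr'def
  set φv := dcdPhiAngle a s with hφvdef
  clear_value ρ' φ' r' φv
  have hS : HasDerivAt (fun s' => dcdPhi a s' θ)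
      (WithLp.toLp 2 ![ρ' * Real.cos φv + dcdRho a s * (-Real.sin φv * φ'),
         ρ' * Real.sin φv + dcdRho a s * (Real.cos φv * φ'),
         r' * Real.cos θ, r' * Real.sin θ]) s := by
    apply hasDerivAt_euclidean4
    intro i
    fin_cases i
    · exact (hρ.mul hφ.cos).congr_deriv (by subst hφvdef; rfl)
    · exact (hρ.mul hφ.sin).congr_deriv (by subst hφvdef; rfl)
    · have : HasDerivAt (fun t => Real.sqrt (1 - (dcdRho a t)^2) * Real.cos θ) (r' * Real.cos θ) s := by
        simp only [hsub]
        exact hr.mul_const _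
      simpa [dcdPhi] using this
    · have : HasDerivAt (fun t => Real.sqrt (1 - (dcdRho a t)^2) * Real.sin θ) (r' * Real.sin θ) s := by
        simp only [hsub]
        exact hr.mul_const _
      simpa [dcdPhi] using this
  have hT : HasDerivAt (fun θ' => dcdPhi a s θ')
      (WithLp.toLp 2 ![0, 0, Real.sqrt (1 - (dcdRho a s)^2) * -Real.sin θ,
         Real.sqrt (1 - (dcdRho a s)^2) * Real.cos θ]) θ := by
    apply hasDerivAt_euclidean4
    intro i
    fin_cases i
    · simpa [dcdPhi] using hasDerivAt_const θ (dcdRho a s * Real.cos (dcdPhiAngle a s))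
    · simpa [dcdPhi] using hasDerivAt_const θ (dcdRho a s * Real.sin (dcdPhiAngle a s))
    · simpa [dcdPhi] using (Real.hasDerivAt_cos θ).const_mul (Real.sqrt (1 - (dcdRho a s)^2))
    · simpa [dcdPhi] using (Real.hasDerivAt_sin θ).const_mul (Real.sqrt (1 - (dcdRho a s)^2))
  rw [hS.deriv, hT.deriv]
  have pythφ := Real.sin_sq_add_cos_sq φv
  have pythθ := Real.sin_sq_add_cos_sq θ
  have pyth2 := Real.sin_sq_add_cos_sq (2*s)
  have hρval : dcdRho a s = Real.sqrt (1/2 - a*Real.cos (2*s)) := rfl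
  refine ⟨?_, ?_, ?_, ?_⟩
  · have h1 : ‖dcdPhi a s θ‖^2 = 1 := by
      rw [norm_sq_euclidean4]
      simp only [dcdPhi, Matrix.cons_val_zero, Matrix.cons_val_one, Matrix.head_cons,
        Matrix.cons_val_two, Matrix.tail_cons, Matrix.cons_val_three]
      rw [hsub s, hρval]
      nlinarith [e1, e2, Real.sin_sq_add_cos_sq (dcdPhiAngle a s), pythθ]
    nlinarith [h1, norm_nonneg (dcdPhi a s θ)]
  · rw [norm_sq_euclidean4]
    simp only [Matrix.cons_val_zero, Matrix.cons_val_one, Matrix.head_cons,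
      Matrix.cons_val_two, Matrix.tail_cons, Matrix.cons_val_three]
    rw [hρval]
    have step : (ρ' * Real.cos φv + Real.sqrt (1/2 - a*Real.cos (2*s)) * (-Real.sin φv * φ'))^2
        + (ρ' * Real.sin φv + Real.sqrt (1/2 - a*Real.cos (2*s)) * (Real.cos φv * φ'))^2
        + (r' * Real.cos θ)^2 + (r' * Real.sin θ)^2
        = (ρ'^2 + Real.sqrt (1/2 - a*Real.cos (2*s))^2 * φ'^2) * (Real.sin φv^2 + Real.cos φv^2)
          + r'^2 * (Real.sin θ^2 + Real.cos θ^2) := by ring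
    rw [step, pythφ, pythθ, mul_one, mul_one, e1, hρ'def, hφ'def, hr'def]
    exact keylem _ _ _ _ _ _ hsg.ne' hsh.ne' hG.ne' e1 e2
      (by rw [e3]; nlinarith [pyth2]) (by ring)
  · rw [inner_euclidean4]
    simp only [Matrix.cons_val_zero, Matrix.cons_val_one, Matrix.head_cons,
      Matrix.cons_val_two, Matrix.tail_cons, Matrix.cons_val_three]
    ring
  · rw [norm_sq_euclidean4]
    simp only [Matrix.cons_val_zero, Matrix.cons_val_one, Matrix.head_cons,
      Matrix.cons_val_two, Matrix.tail_cons, Matrix.cons_val_three]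
    rw [hsub s, hρval]
    nlinarith [e1, e2, pythθ]
end

section
/- Let a be a real number with −1/2 < a < 1/2. Then the function u₁(s) = √(1/2 + a·cos(2s)) satisfies the ordinary differential equation (1/2 + a·cos(2s))·u''(s) − a·sin(2s)·u'(s) + 2a·cos(2s)·u(s) = 0 for all s ∈ ℝ. -/
open Real

/-- `u₁(s) = √(1/2 + a·cos 2s)` satisfies the first angular Fourier mode ODE
`(1/2 + a·cos 2s)·u'' − a·sin(2s)·u' + 2a·cos(2s)·u = 0` on `ℝ`. -/
theorem stmt6 (a : ℝ) (ha : -(1/2) < a) (ha' : a < 1/2) (s : ℝ) :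
    (1/2 + a * Real.cos (2*s)) *
        deriv (deriv fun s : ℝ => Real.sqrt (1/2 + a * Real.cos (2*s))) s
      - a * Real.sin (2*s) *
        deriv (fun s : ℝ => Real.sqrt (1/2 + a * Real.cos (2*s))) s
      + 2 * a * Real.cos (2*s) * Real.sqrt (1/2 + a * Real.cos (2*s)) = 0 := by
  have pos : ∀ x : ℝ, 0 < 1/2 + a * Real.cos (2*x) := by
    intro x
    have h1 := Real.neg_one_le_cos (2*x)
    have h2 := Real.cos_le_one (2*x)
    rcases le_total 0 a with h|h
    · nlinarith [mul_nonneg h (by linarith : (0:ℝ) ≤ Real.cos (2*x) + 1)]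
    · nlinarith [mul_nonneg (by linarith : (0:ℝ) ≤ -a) (by linarith : (0:ℝ) ≤ 1 - Real.cos (2*x))]
  have hfd : ∀ x : ℝ, HasDerivAt (fun t : ℝ => 1/2 + a * Real.cos (2*t))
      (-2*a*Real.sin (2*x)) x := by
    intro x
    have h2 : HasDerivAt (fun t : ℝ => 2*t) 2 x := by
      simpa using (hasDerivAt_id x).const_mul 2
    have hc : HasDerivAt (fun t : ℝ => Real.cos (2*t)) (-Real.sin (2*x) * 2) x :=
      (Real.hasDerivAt_cos (2*x)).comp x h2
    have := (hc.const_mul a).const_add (1/2 : ℝ)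
    rwa [show -2*a*Real.sin (2*x) = a * (-Real.sin (2*x) * 2) by ring]
  have hu : ∀ x : ℝ, HasDerivAt (fun t : ℝ => Real.sqrt (1/2 + a * Real.cos (2*t)))
      (-2*a*Real.sin (2*x) / (2 * Real.sqrt (1/2 + a * Real.cos (2*x)))) x :=
    fun x => (hfd x).sqrt (ne_of_gt (pos x))
  have hd1 : deriv (fun t : ℝ => Real.sqrt (1/2 + a * Real.cos (2*t)))
      = fun x => -2*a*Real.sin (2*x) / (2 * Real.sqrt (1/2 + a * Real.cos (2*x))) :=
    funext fun x => (hu x).deriv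
  -- second derivative at s
  have hsq : Real.sqrt (1/2 + a * Real.cos (2*s)) ≠ 0 :=
    Real.sqrt_ne_zero'.2 (pos s)
  have hnum : HasDerivAt (fun t : ℝ => -2*a*Real.sin (2*t)) (-2*a*(Real.cos (2*s)*2)) s := by
    have h2 : HasDerivAt (fun t : ℝ => 2*t) 2 s := by
      simpa using (hasDerivAt_id s).const_mul 2
    have hc : HasDerivAt (fun t : ℝ => Real.sin (2*t)) (Real.cos (2*s) * 2) s :=
      (Real.hasDerivAt_sin (2*s)).comp s h2
    simpa [mul_assoc] using hc.const_mul (-2*a)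
  have hden : HasDerivAt (fun t : ℝ => 2 * Real.sqrt (1/2 + a * Real.cos (2*t)))
      (2 * (-2*a*Real.sin (2*s) / (2 * Real.sqrt (1/2 + a * Real.cos (2*s))))) s :=
    (hu s).const_mul 2
  have hden0 : (2 : ℝ) * Real.sqrt (1/2 + a * Real.cos (2*s)) ≠ 0 := by
    positivity
  have h2nd : HasDerivAt (deriv (fun t : ℝ => Real.sqrt (1/2 + a * Real.cos (2*t))))
      ((-2*a*(Real.cos (2*s)*2) * (2 * Real.sqrt (1/2 + a * Real.cos (2*s)))
        - (-2*a*Real.sin (2*s)) *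
          (2 * (-2*a*Real.sin (2*s) / (2 * Real.sqrt (1/2 + a * Real.cos (2*s))))))
        / (2 * Real.sqrt (1/2 + a * Real.cos (2*s)))^2) s := by
    rw [hd1]
    exact hnum.div hden hden0
  rw [h2nd.deriv, hd1]
  simp only []
  obtain ⟨r, hr, hsq2, hrpos⟩ : ∃ r : ℝ, Real.sqrt (1/2 + a*Real.cos (2*s)) = r ∧
      r^2 = 1/2 + a*Real.cos (2*s) ∧ 0 < r :=
    ⟨_, rfl, Real.sq_sqrt (pos s).le, Real.sqrt_pos.2 (pos s)⟩
  rw [hr]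
  have hsin : Real.sin (2*s)^2 = 1 - Real.cos (2*s)^2 := by
    have := Real.sin_sq_add_cos_sq (2*s)
    linarith
  have hr0 : r ≠ 0 := ne_of_gt hrpos
  field_simp
  linear_combination (-2*a*Real.cos (2*s) + 4*a*Real.cos (2*s)*(r^2 + (1/2 + a*Real.cos (2*s))) - 4*a^2*Real.cos (2*s)^2 + 2*a^2*Real.sin (2*s)^2) * hsq2
end

section
/- Let a be a real number with −1/2 < a < 1/2, and define h(s) = ∫₀ˢ (1/2 + a·cos(2t))^{−3/2} dt. Then the function u₂(s) = √(1/2 + a·cos(2s)) · h(s) satisfies the ordinary differential equation (1/2 + a·cos(2s))·u''(s) − a·sin(2s)·u'(s) + 2a·cos(2s)·u(s) = 0 for all s ∈ ℝ. -/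
open Real

/-- With `h(s) = ∫₀ˢ (1/2 + a·cos 2t)^(−3/2) dt`, the function
`u₂(s) = √(1/2 + a·cos 2s)·h(s)` satisfies
`(1/2 + a·cos 2s)·u'' − a·sin(2s)·u' + 2a·cos(2s)·u = 0` on `ℝ`. -/
theorem stmt7 (a : ℝ) (ha : -(1/2) < a) (ha' : a < 1/2) (s : ℝ) :
    (1/2 + a * Real.cos (2*s)) *
        deriv (deriv fun s : ℝ => Real.sqrt (1/2 + a * Real.cos (2*s)) *
          ∫ t in (0:ℝ)..s, (1/2 + a * Real.cos (2*t)) ^ (-(3/2) : ℝ)) s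
      - a * Real.sin (2*s) *
        deriv (fun s : ℝ => Real.sqrt (1/2 + a * Real.cos (2*s)) *
          ∫ t in (0:ℝ)..s, (1/2 + a * Real.cos (2*t)) ^ (-(3/2) : ℝ)) s
      + 2 * a * Real.cos (2*s) * (Real.sqrt (1/2 + a * Real.cos (2*s)) *
          ∫ t in (0:ℝ)..s, (1/2 + a * Real.cos (2*t)) ^ (-(3/2) : ℝ)) = 0 := by
  -- setup
  set f : ℝ → ℝ := fun s => 1/2 + a * Real.cos (2*s) with hfdef
  have fpos : ∀ x : ℝ, 0 < f x := by
    intro x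
    have h1 : |a * Real.cos (2*x)| ≤ |a| := by
      rw [abs_mul]
      exact mul_le_of_le_one_right (abs_nonneg _) (Real.abs_cos_le_one _)
    have h2 : |a| < 1/2 := abs_lt.mpr ⟨ha, ha'⟩
    have h3 := neg_abs_le (a * Real.cos (2*x))
    simp only [hfdef]
    linarith
  have hfd : ∀ x : ℝ, HasDerivAt f (-(2*a*Real.sin (2*x))) x := by
    intro x
    have h1 : HasDerivAt (fun y : ℝ => 2*y) 2 x := by
      simpa using (hasDerivAt_id x).const_mul 2
    have h2 : HasDerivAt (fun y : ℝ => Real.cos (2*y)) (-Real.sin (2*x) * 2) x :=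
      (Real.hasDerivAt_cos (2*x)).comp x h1
    have h3 := (h2.const_mul a).const_add (1/2 : ℝ)
    refine h3.congr_deriv ?_
    ring
  have fcont : Continuous f := by
    exact continuous_const.add (continuous_const.mul (Real.continuous_cos.comp
      (continuous_const.mul continuous_id)))
  set g : ℝ → ℝ := fun t => f t ^ (-(3/2) : ℝ) with hgdef
  have gcont : Continuous g := fcont.rpow_const fun x => Or.inl (fpos x).ne'
  set H : ℝ → ℝ := fun x => ∫ t in (0:ℝ)..x, g t with hHdef
  have hHd : ∀ x : ℝ, HasDerivAt H (g x) x := fun x =>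
    intervalIntegral.integral_hasDerivAt_right (gcont.intervalIntegrable 0 x)
      (gcont.stronglyMeasurableAtFilter _ _) gcont.continuousAt
  -- derivative of sqrt ∘ f
  have hsq : ∀ x : ℝ, HasDerivAt (fun y => Real.sqrt (f y))
      (-(2*a*Real.sin (2*x)) / (2 * Real.sqrt (f x))) x :=
    fun x => (hfd x).sqrt (fpos x).ne'
  -- the function u₂ and its derivative
  set u : ℝ → ℝ := fun x => Real.sqrt (f x) * H x with hudef
  set u' : ℝ → ℝ := fun x =>
    -(2*a*Real.sin (2*x)) / (2 * Real.sqrt (f x)) * H x + Real.sqrt (f x) * g x with hu'def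
  have hud : ∀ x : ℝ, HasDerivAt u (u' x) x := fun x => (hsq x).mul (hHd x)
  have hderiv1 : deriv u = u' := funext fun x => (hud x).deriv
  -- second derivative
  have hx0 : Real.sqrt (f s) ≠ 0 := (Real.sqrt_pos.mpr (fpos s)).ne'
  have h2x0 : (2 : ℝ) * Real.sqrt (f s) ≠ 0 := by positivity
  -- derivative of the quotient part p x = -(2 a sin 2x) / (2 √(f x))
  have hnum : HasDerivAt (fun x : ℝ => -(2*a*Real.sin (2*x))) (-(4*a*Real.cos (2*s))) s := by
    have h1 : HasDerivAt (fun y : ℝ => 2*y) 2 s := by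
      simpa using (hasDerivAt_id s).const_mul 2
    have h2 : HasDerivAt (fun y : ℝ => Real.sin (2*y)) (Real.cos (2*s) * 2) s :=
      (Real.hasDerivAt_sin (2*s)).comp s h1
    have := ((h2.const_mul (2*a)).neg)
    refine this.congr_deriv ?_
    ring
  have hden : HasDerivAt (fun x : ℝ => 2 * Real.sqrt (f x))
      (2 * (-(2*a*Real.sin (2*s)) / (2 * Real.sqrt (f s)))) s := (hsq s).const_mul 2
  have hp : HasDerivAt (fun x : ℝ => -(2*a*Real.sin (2*x)) / (2 * Real.sqrt (f x)))
      ((-(4*a*Real.cos (2*s)) * (2 * Real.sqrt (f s)) -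
        -(2*a*Real.sin (2*s)) * (2 * (-(2*a*Real.sin (2*s)) / (2 * Real.sqrt (f s))))) /
        (2 * Real.sqrt (f s))^2) s := hnum.div hden h2x0
  have hg' : HasDerivAt g (-(3/2) * f s ^ (-(3/2) - 1 : ℝ) * -(2*a*Real.sin (2*s))) s := by
    have := (hfd s).rpow_const (p := (-(3/2) : ℝ)) (Or.inl (fpos s).ne')
    convert this using 1
    ring
  have hu'd : HasDerivAt u'
      (((-(4*a*Real.cos (2*s)) * (2 * Real.sqrt (f s)) -
        -(2*a*Real.sin (2*s)) * (2 * (-(2*a*Real.sin (2*s)) / (2 * Real.sqrt (f s))))) /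
        (2 * Real.sqrt (f s))^2) * H s
        + (-(2*a*Real.sin (2*s)) / (2 * Real.sqrt (f s))) * g s
        + ((-(2*a*Real.sin (2*s)) / (2 * Real.sqrt (f s))) * g s
          + Real.sqrt (f s) * (-(3/2) * f s ^ (-(3/2) - 1 : ℝ) * -(2*a*Real.sin (2*s))))) s :=
    (hp.mul (hHd s)).add ((hsq s).mul hg')
  -- rewrite goal
  have key1 : deriv (deriv fun s : ℝ => Real.sqrt (1/2 + a * Real.cos (2*s)) *
          ∫ t in (0:ℝ)..s, (1/2 + a * Real.cos (2*t)) ^ (-(3/2) : ℝ)) s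
      = ((-(4*a*Real.cos (2*s)) * (2 * Real.sqrt (f s)) -
        -(2*a*Real.sin (2*s)) * (2 * (-(2*a*Real.sin (2*s)) / (2 * Real.sqrt (f s))))) /
        (2 * Real.sqrt (f s))^2) * H s
        + (-(2*a*Real.sin (2*s)) / (2 * Real.sqrt (f s))) * g s
        + ((-(2*a*Real.sin (2*s)) / (2 * Real.sqrt (f s))) * g s
          + Real.sqrt (f s) * (-(3/2) * f s ^ (-(3/2) - 1 : ℝ) * -(2*a*Real.sin (2*s)))) := by
    rw [show (deriv fun s : ℝ => Real.sqrt (1/2 + a * Real.cos (2*s)) *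
          ∫ t in (0:ℝ)..s, (1/2 + a * Real.cos (2*t)) ^ (-(3/2) : ℝ)) = deriv u from rfl,
      hderiv1]
    exact hu'd.deriv
  have key2 : deriv (fun s : ℝ => Real.sqrt (1/2 + a * Real.cos (2*s)) *
          ∫ t in (0:ℝ)..s, (1/2 + a * Real.cos (2*t)) ^ (-(3/2) : ℝ)) s = u' s :=
    (hud s).deriv
  rw [key1, key2]
  -- now pure algebra
  set x := Real.sqrt (f s) with hxdef
  have hx2 : x ^ 2 = f s := Real.sq_sqrt (fpos s).le
  have hxpos : 0 < x := Real.sqrt_pos.mpr (fpos s)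
  have rpow32 : f s ^ (-(3/2) : ℝ) = 1 / (f s * x) := by
    rw [Real.rpow_neg (fpos s).le, show ((3:ℝ)/2) = 1 + 1/2 by norm_num,
      Real.rpow_add (fpos s), Real.rpow_one, ← Real.sqrt_eq_rpow]
    rw [one_div, hxdef]
  have rpow52 : f s ^ (-(3/2) - 1 : ℝ) = 1 / (f s * f s * x) := by
    rw [show (-(3/2) - 1 : ℝ) = -(2 + 1/2) by norm_num, Real.rpow_neg (fpos s).le,
      Real.rpow_add (fpos s), ← Real.sqrt_eq_rpow,
      show ((2:ℝ)) = ((2:ℕ) : ℝ) by norm_num, Real.rpow_natCast]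
    rw [one_div, hxdef]
    ring_nf
  have hgval : g s = 1 / (f s * x) := rpow32
  have hfs : (1/2 + a * Real.cos (2*s)) = f s := rfl
  rw [hu'def]
  simp only [hgval, rpow52]
  rw [hfs, ← hx2]
  rw [Real.sqrt_sq hxpos.le, show intervalIntegral g 0 s MeasureTheory.volume = H s from rfl]
  field_simp
  ring
end

section
/- Let a be a real number with −1/2 < a < 1/2 and let h : ℝ → ℝ be twice differentiable. Then the function u(s) = √(1/2 + a·cos(2s)) · h(s) satisfies (1/2 + a·cos(2s))·u''(s) − a·sin(2s)·u'(s) + 2a·cos(2s)·u(s) = 0 for all s ∈ ℝ if and only if h satisfies (1/2 + a·cos(2s))·h''(s) − 3a·sin(2s)·h'(s) = 0 for all s ∈ ℝ. -/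
open Real

/-- For twice differentiable `h`, `u(s) = √(1/2 + a·cos 2s)·h(s)` satisfies
`(1/2 + a·cos 2s)·u'' − a·sin(2s)·u' + 2a·cos(2s)·u = 0` on `ℝ` iff
`h` satisfies `(1/2 + a·cos 2s)·h'' − 3a·sin(2s)·h' = 0` on `ℝ`. -/
theorem stmt8 (a : ℝ) (ha : -(1/2) < a) (ha' : a < 1/2) (h : ℝ → ℝ)
    (hh1 : Differentiable ℝ h) (hh2 : Differentiable ℝ (deriv h)) :
    (∀ s : ℝ,
      (1/2 + a * Real.cos (2*s)) *
          deriv (deriv fun s : ℝ => Real.sqrt (1/2 + a * Real.cos (2*s)) * h s) s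
        - a * Real.sin (2*s) *
          deriv (fun s : ℝ => Real.sqrt (1/2 + a * Real.cos (2*s)) * h s) s
        + 2 * a * Real.cos (2*s) * (Real.sqrt (1/2 + a * Real.cos (2*s)) * h s) = 0) ↔
    (∀ s : ℝ,
      (1/2 + a * Real.cos (2*s)) * deriv (deriv h) s
        - 3 * a * Real.sin (2*s) * deriv h s = 0) := by
  have hfpos : ∀ s : ℝ, 0 < 1/2 + a * Real.cos (2*s) := by
    intro s
    have hac : |a * Real.cos (2*s)| < 1/2 := by
      calc |a * Real.cos (2*s)| = |a| * |Real.cos (2*s)| := abs_mul _ _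
        _ ≤ |a| * 1 := by
            exact mul_le_mul_of_nonneg_left (Real.abs_cos_le_one _) (abs_nonneg _)
        _ < 1/2 := by rw [mul_one]; exact abs_lt.mpr ⟨ha, ha'⟩
    have := neg_abs_le (a * Real.cos (2*s))
    linarith
  have h2s : ∀ s : ℝ, HasDerivAt (fun s : ℝ => 2*s) 2 s := by
    intro s
    simpa using (hasDerivAt_id s).const_mul 2
  have hF : ∀ s : ℝ, HasDerivAt (fun s : ℝ => 1/2 + a * Real.cos (2*s))
      (-(2*a*Real.sin (2*s))) s := by
    intro s
    have := (((Real.hasDerivAt_cos (2*s)).comp s (h2s s)).const_mul a).const_add (1/2)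
    refine this.congr_deriv ?_
    ring
  have hG : ∀ s : ℝ, HasDerivAt (fun s : ℝ => Real.sqrt (1/2 + a * Real.cos (2*s)))
      (-(2*a*Real.sin (2*s)) / (2 * Real.sqrt (1/2 + a * Real.cos (2*s)))) s := by
    intro s
    exact (hF s).sqrt (hfpos s).ne'
  have hU : ∀ s : ℝ, HasDerivAt (fun s : ℝ => Real.sqrt (1/2 + a * Real.cos (2*s)) * h s)
      (-(2*a*Real.sin (2*s)) / (2 * Real.sqrt (1/2 + a * Real.cos (2*s))) * h s
        + Real.sqrt (1/2 + a * Real.cos (2*s)) * deriv h s) s := by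
    intro s
    exact (hG s).mul (hh1 s).hasDerivAt
  have hdU : deriv (fun s : ℝ => Real.sqrt (1/2 + a * Real.cos (2*s)) * h s)
      = fun s : ℝ => -(2*a*Real.sin (2*s)) / (2 * Real.sqrt (1/2 + a * Real.cos (2*s))) * h s
        + Real.sqrt (1/2 + a * Real.cos (2*s)) * deriv h s := by
    funext s
    exact (hU s).deriv
  -- second derivative
  have hN : ∀ s : ℝ, HasDerivAt (fun s : ℝ => -(2*a*Real.sin (2*s)))
      (-(2*a*(Real.cos (2*s)*2))) s := by
    intro s
    have := (((Real.hasDerivAt_sin (2*s)).comp s (h2s s)).const_mul (2*a)).neg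
    exact this
  have hD : ∀ s : ℝ, HasDerivAt (fun s : ℝ => 2 * Real.sqrt (1/2 + a * Real.cos (2*s)))
      (2 * (-(2*a*Real.sin (2*s)) / (2 * Real.sqrt (1/2 + a * Real.cos (2*s))))) s := by
    intro s
    exact (hG s).const_mul 2
  have hGpos : ∀ s : ℝ, 0 < Real.sqrt (1/2 + a * Real.cos (2*s)) := by
    intro s
    exact Real.sqrt_pos.mpr (hfpos s)
  have hU2 : ∀ s : ℝ, HasDerivAt (deriv (fun s : ℝ => Real.sqrt (1/2 + a * Real.cos (2*s)) * h s))
      (((-(2*a*(Real.cos (2*s)*2))) * (2 * Real.sqrt (1/2 + a * Real.cos (2*s)))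
          - (-(2*a*Real.sin (2*s))) * (2 * (-(2*a*Real.sin (2*s)) / (2 * Real.sqrt (1/2 + a * Real.cos (2*s))))))
          / (2 * Real.sqrt (1/2 + a * Real.cos (2*s)))^2 * h s
        + -(2*a*Real.sin (2*s)) / (2 * Real.sqrt (1/2 + a * Real.cos (2*s))) * deriv h s
        + (-(2*a*Real.sin (2*s)) / (2 * Real.sqrt (1/2 + a * Real.cos (2*s))) * deriv h s
            + Real.sqrt (1/2 + a * Real.cos (2*s)) * deriv (deriv h) s)) s := by
    intro s
    rw [hdU]
    exact ((((hN s).div (hD s) (mul_pos two_pos (hGpos s)).ne').mul (hh1 s).hasDerivAt).add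
      ((hG s).mul (hh2 s).hasDerivAt))
  have key : ∀ s : ℝ,
      (1/2 + a * Real.cos (2*s)) *
          deriv (deriv fun s : ℝ => Real.sqrt (1/2 + a * Real.cos (2*s)) * h s) s
        - a * Real.sin (2*s) *
          deriv (fun s : ℝ => Real.sqrt (1/2 + a * Real.cos (2*s)) * h s) s
        + 2 * a * Real.cos (2*s) * (Real.sqrt (1/2 + a * Real.cos (2*s)) * h s)
      = Real.sqrt (1/2 + a * Real.cos (2*s)) *
          ((1/2 + a * Real.cos (2*s)) * deriv (deriv h) s
            - 3 * a * Real.sin (2*s) * deriv h s) := by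
    intro s
    rw [(hU2 s).deriv, (hU s).deriv]
    set G := Real.sqrt (1/2 + a * Real.cos (2*s)) with hGdef
    have hGne : G ≠ 0 := (hGpos s).ne'
    have hG2 : G^2 = 1/2 + a * Real.cos (2*s) := Real.sq_sqrt (hfpos s).le
    rw [← hG2]
    field_simp
    ring
  constructor
  · intro H s
    have := H s
    rw [key s] at this
    rcases mul_eq_zero.mp this with h0 | h0
    · exact absurd h0 (hGpos s).ne'
    · exact h0
  · intro H s
    rw [key s, H s, mul_zero]
end

section
/- Let a be a real number with −1/2 < a ≤ 0, let ρ(s) = √(1/2 − a·cos(2s)), and let φ(s) = √(1/4 − a²) · ∫₀ˢ dt / ((1/2 − a·cos(2t))·√(1/2 + a·cos(2t))). Then the functions b₁(s) = ρ(s)·cos φ(s) and b₂(s) = ρ(s)·sin φ(s) both satisfy the ordinary differential equation b''(s) − (a·sin(2s)/(1/2 + a·cos(2s)))·b'(s) + 2·b(s) = 0 for all s ∈ ℝ. -/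
open Real

section
variable {a : ℝ} (ha : -(1/2) < a) (ha' : a ≤ 0)

include ha ha' in
lemma hQpos (s : ℝ) : 0 < 1/2 - a * Real.cos (2*s) := by
  nlinarith [Real.neg_one_le_cos (2*s), Real.cos_le_one (2*s)]

include ha ha' in
lemma hPpos (s : ℝ) : 0 < 1/2 + a * Real.cos (2*s) := by
  nlinarith [Real.neg_one_le_cos (2*s), Real.cos_le_one (2*s)]

lemma h2der (s : ℝ) : HasDerivAt (fun s : ℝ => 2*s) 2 s := by
  simpa using (hasDerivAt_id s).const_mul (2:ℝ)

lemma hQder (s : ℝ) : HasDerivAt (fun s : ℝ => 1/2 - a * Real.cos (2*s)) (2*a*Real.sin (2*s)) s := by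
  have h1 : HasDerivAt (fun s : ℝ => Real.cos (2*s)) (-Real.sin (2*s) * 2) s := (h2der s).cos
  have := (h1.const_mul a).const_sub (1/2)
  refine this.congr_deriv ?_; symm; ring

lemma hPder (s : ℝ) : HasDerivAt (fun s : ℝ => 1/2 + a * Real.cos (2*s)) (-(2*a*Real.sin (2*s))) s := by
  have h1 : HasDerivAt (fun s : ℝ => Real.cos (2*s)) (-Real.sin (2*s) * 2) s := (h2der s).cos
  have := (h1.const_mul a).const_add (1/2)
  refine this.congr_deriv ?_; symm; ring

include ha ha' in
lemma hrder (s : ℝ) : HasDerivAt (fun s : ℝ => Real.sqrt (1/2 - a * Real.cos (2*s)))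
    (a * Real.sin (2*s) / Real.sqrt (1/2 - a * Real.cos (2*s))) s := by
  have hq := hQpos ha ha' s
  have h := (Real.hasDerivAt_sqrt hq.ne').comp s (hQder s)
  refine h.congr_deriv ?_; symm
  have h0 : Real.sqrt (1/2 - a * Real.cos (2*s)) ≠ 0 := Real.sqrt_ne_zero'.2 hq
  field_simp

include ha ha' in
lemma hpder (s : ℝ) : HasDerivAt (fun s : ℝ => Real.sqrt (1/2 + a * Real.cos (2*s)))
    (-(a * Real.sin (2*s)) / Real.sqrt (1/2 + a * Real.cos (2*s))) s := by
  have hq := hPpos ha ha' s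
  have h := (Real.hasDerivAt_sqrt hq.ne').comp s (hPder s)
  refine h.congr_deriv ?_; symm
  have h0 : Real.sqrt (1/2 + a * Real.cos (2*s)) ≠ 0 := Real.sqrt_ne_zero'.2 hq
  field_simp

include ha ha' in
lemma hgcont : Continuous (fun t : ℝ => 1 / ((1/2 - a * Real.cos (2*t)) * Real.sqrt (1/2 + a * Real.cos (2*t)))) := by
  apply continuous_const.div
  · exact (continuous_const.sub (continuous_const.mul (Real.continuous_cos.comp (continuous_const.mul continuous_id)))).mul
      (Real.continuous_sqrt.comp (continuous_const.add (continuous_const.mul (Real.continuous_cos.comp (continuous_const.mul continuous_id)))))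
  · intro t
    exact mul_ne_zero (hQpos ha ha' t).ne' (Real.sqrt_ne_zero'.2 (hPpos ha ha' t))

include ha ha' in
lemma hphider (s : ℝ) : HasDerivAt (fun s : ℝ => Real.sqrt (1/4 - a^2) *
      ∫ t in (0:ℝ)..s, 1 / ((1/2 - a * Real.cos (2*t)) * Real.sqrt (1/2 + a * Real.cos (2*t))))
    (Real.sqrt (1/4 - a^2) / ((1/2 - a * Real.cos (2*s)) * Real.sqrt (1/2 + a * Real.cos (2*s)))) s := by
  have hg := hgcont ha ha'
  have h := intervalIntegral.integral_hasDerivAt_right (hg.intervalIntegrable 0 s)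
    (hg.stronglyMeasurableAtFilter _ _) hg.continuousAt
  have h2 := h.const_mul (Real.sqrt (1/4 - a^2))
  refine h2.congr_deriv ?_; symm
  rw [mul_one_div]

include ha ha' in
lemma master (C S : ℝ → ℝ)
    (hCS : ∀ x, C x ^ 2 + S x ^ 2 = 1)
    (hC : ∀ x, HasDerivAt C (-S x * (Real.sqrt (1/4 - a^2) /
        ((1/2 - a * Real.cos (2*x)) * Real.sqrt (1/2 + a * Real.cos (2*x))))) x)
    (hS : ∀ x, HasDerivAt S (C x * (Real.sqrt (1/4 - a^2) /
        ((1/2 - a * Real.cos (2*x)) * Real.sqrt (1/2 + a * Real.cos (2*x))))) x)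
    (s : ℝ) :
    deriv (deriv fun x : ℝ => Real.sqrt (1/2 - a * Real.cos (2*x)) * C x) s
      - (a * Real.sin (2*s) / (1/2 + a * Real.cos (2*s))) *
        deriv (fun x : ℝ => Real.sqrt (1/2 - a * Real.cos (2*x)) * C x) s
      + 2 * (Real.sqrt (1/2 - a * Real.cos (2*s)) * C s) = 0 := by
  have hr0 : ∀ x : ℝ, Real.sqrt (1/2 - a * Real.cos (2*x)) ≠ 0 :=
    fun x => Real.sqrt_ne_zero'.2 (hQpos ha ha' x)
  have hp0 : ∀ x : ℝ, Real.sqrt (1/2 + a * Real.cos (2*x)) ≠ 0 :=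
    fun x => Real.sqrt_ne_zero'.2 (hPpos ha ha' x)
  have hr2 : ∀ x : ℝ, Real.sqrt (1/2 - a * Real.cos (2*x)) ^ 2 = 1/2 - a * Real.cos (2*x) :=
    fun x => Real.sq_sqrt (hQpos ha ha' x).le
  have hp2 : ∀ x : ℝ, Real.sqrt (1/2 + a * Real.cos (2*x)) ^ 2 = 1/2 + a * Real.cos (2*x) :=
    fun x => Real.sq_sqrt (hPpos ha ha' x).le
  set c := Real.sqrt (1/4 - a^2) with hcdef
  -- first derivative
  have hD : ∀ x : ℝ, HasDerivAt (fun x : ℝ => Real.sqrt (1/2 - a * Real.cos (2*x)) * C x)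
      (a * Real.sin (2*x) * C x / Real.sqrt (1/2 - a * Real.cos (2*x))
        - c * S x / (Real.sqrt (1/2 + a * Real.cos (2*x)) * Real.sqrt (1/2 - a * Real.cos (2*x)))) x := by
    intro x
    have h := (hrder ha ha' x).mul (hC x)
    have hRx := hr2 x
    have hR0 := hr0 x
    have hP0x := hp0 x
    have hQ0x : (1/2 - a * Real.cos (2*x)) ≠ 0 := (hQpos ha ha' x).ne'
    set R := Real.sqrt (1/2 - a * Real.cos (2*x)) with hRdef
    set Pp := Real.sqrt (1/2 + a * Real.cos (2*x)) with hPdef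
    refine h.congr_deriv ?_; symm
    rw [← hRx]
    field_simp
    ring
  have hderivb : deriv (fun x : ℝ => Real.sqrt (1/2 - a * Real.cos (2*x)) * C x)
      = fun x => a * Real.sin (2*x) * C x / Real.sqrt (1/2 - a * Real.cos (2*x))
        - c * S x / (Real.sqrt (1/2 + a * Real.cos (2*x)) * Real.sqrt (1/2 - a * Real.cos (2*x))) :=
    funext fun x => (hD x).deriv
  -- second derivative
  have hnum1 : HasDerivAt (fun x : ℝ => a * Real.sin (2*x) * C x)
      (a * (Real.cos (2*s) * 2) * C s + a * Real.sin (2*s) * (-S s * (c /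
        ((1/2 - a * Real.cos (2*s)) * Real.sqrt (1/2 + a * Real.cos (2*s)))))) s :=
    (((h2der s).sin).const_mul a).mul (hC s)
  have ht1 := hnum1.div (hrder ha ha' s) (hr0 s)
  have hnum2 : HasDerivAt (fun x : ℝ => c * S x)
      (c * (C s * (c / ((1/2 - a * Real.cos (2*s)) * Real.sqrt (1/2 + a * Real.cos (2*s)))))) s :=
    (hS s).const_mul c
  have hden2 := (hpder ha ha' s).mul (hrder ha ha' s)
  have ht2 := hnum2.div hden2 (mul_ne_zero (hp0 s) (hr0 s))
  have hE := ht1.sub ht2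
  rw [hderivb]
  have hE' : HasDerivAt (fun x : ℝ => a * Real.sin (2*x) * C x / Real.sqrt (1/2 - a * Real.cos (2*x))
          - c * S x / (Real.sqrt (1/2 + a * Real.cos (2*x)) * Real.sqrt (1/2 - a * Real.cos (2*x)))) _ s := hE
  rw [hE'.deriv, Pi.mul_apply]
  beta_reduce
  set u := Real.sin (2*s) with hudef
  set v := Real.cos (2*s) with hvdef
  set r := Real.sqrt (1/2 - a * v) with hrdef
  set p := Real.sqrt (1/2 + a * v) with hpdef
  set Cs := C s with hCdef
  set Ss := S s with hSdef
  have h1 : r ^ 2 = 1/2 - a * v := hr2 s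
  have h2 : p ^ 2 = 1/2 + a * v := hp2 s
  have h3 : c ^ 2 = 1/4 - a^2 := Real.sq_sqrt (by nlinarith)
  have h4 : u ^ 2 = 1 - v ^ 2 := by
    have := Real.sin_sq_add_cos_sq (2*s); rw [← hudef, ← hvdef] at this; linarith
  have h5 : Cs ^ 2 + Ss ^ 2 = 1 := hCS s
  have hQ0 : (1/2 - a * v) ≠ 0 := (hQpos ha ha' s).ne'
  have hP0 : (1/2 + a * v) ≠ 0 := (hPpos ha ha' s).ne'
  rw [← h1, ← h2]
  clear ht1 ht2 hE hD hderivb hnum1 hnum2 hden2 hC hS hr0 hp0 hr2 hp2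
  have hrne : r ≠ 0 := Real.sqrt_ne_zero'.2 (by rw [hvdef]; exact hQpos ha ha' s)
  have hpne : p ≠ 0 := Real.sqrt_ne_zero'.2 (by rw [hvdef]; exact hPpos ha ha' s)
  clear_value u v r p c Cs Ss
  field_simp
  linear_combination (Cs*p*(2*r^2*p^2 + p^2 - a^2*u^2)) * h1 + (Cs*p*((1/2 - a*v) - a^2*u^2)) * h2 + (-(Cs*p)) * h3 + (-(Cs*p*a^2)) * h4

end


/-- The first two coordinates `b₁(s) = ρ(s)·cos φ(s)` and `b₂(s) = ρ(s)·sin φ(s)` of the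
do Carmo–Dajczer parametrization satisfy the zeroth Fourier mode ODE
`b'' − (a·sin 2s/(1/2 + a·cos 2s))·b' + 2b = 0` on `ℝ`. -/
theorem stmt10 (a : ℝ) (ha : -(1/2) < a) (ha' : a ≤ 0) :
    (∀ s : ℝ,
      deriv (deriv fun s : ℝ => Real.sqrt (1/2 - a * Real.cos (2*s)) *
          Real.cos (Real.sqrt (1/4 - a^2) *
            ∫ t in (0:ℝ)..s,
              1 / ((1/2 - a * Real.cos (2*t)) * Real.sqrt (1/2 + a * Real.cos (2*t))))) s
        - (a * Real.sin (2*s) / (1/2 + a * Real.cos (2*s))) *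
          deriv (fun s : ℝ => Real.sqrt (1/2 - a * Real.cos (2*s)) *
            Real.cos (Real.sqrt (1/4 - a^2) *
              ∫ t in (0:ℝ)..s,
                1 / ((1/2 - a * Real.cos (2*t)) * Real.sqrt (1/2 + a * Real.cos (2*t))))) s
        + 2 * (Real.sqrt (1/2 - a * Real.cos (2*s)) *
            Real.cos (Real.sqrt (1/4 - a^2) *
              ∫ t in (0:ℝ)..s,
                1 / ((1/2 - a * Real.cos (2*t)) * Real.sqrt (1/2 + a * Real.cos (2*t)))))
        = 0) ∧
    (∀ s : ℝ,
      deriv (deriv fun s : ℝ => Real.sqrt (1/2 - a * Real.cos (2*s)) *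
          Real.sin (Real.sqrt (1/4 - a^2) *
            ∫ t in (0:ℝ)..s,
              1 / ((1/2 - a * Real.cos (2*t)) * Real.sqrt (1/2 + a * Real.cos (2*t))))) s
        - (a * Real.sin (2*s) / (1/2 + a * Real.cos (2*s))) *
          deriv (fun s : ℝ => Real.sqrt (1/2 - a * Real.cos (2*s)) *
            Real.sin (Real.sqrt (1/4 - a^2) *
              ∫ t in (0:ℝ)..s,
                1 / ((1/2 - a * Real.cos (2*t)) * Real.sqrt (1/2 + a * Real.cos (2*t))))) s
        + 2 * (Real.sqrt (1/2 - a * Real.cos (2*s)) *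
            Real.sin (Real.sqrt (1/4 - a^2) *
              ∫ t in (0:ℝ)..s,
                1 / ((1/2 - a * Real.cos (2*t)) * Real.sqrt (1/2 + a * Real.cos (2*t)))))
        = 0) := by
  set φ : ℝ → ℝ := fun s => Real.sqrt (1/4 - a^2) *
      ∫ t in (0:ℝ)..s, 1 / ((1/2 - a * Real.cos (2*t)) * Real.sqrt (1/2 + a * Real.cos (2*t)))
    with hφ
  constructor
  · intro s
    exact master ha ha' (fun x => Real.cos (φ x)) (fun x => Real.sin (φ x))
      (fun x => by rw [Real.cos_sq_add_sin_sq])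
      (fun x => (Real.hasDerivAt_cos (φ x)).comp x (hphider ha ha' x))
      (fun x => (Real.hasDerivAt_sin (φ x)).comp x (hphider ha ha' x)) s
  · intro s
    refine master ha ha' (fun x => Real.sin (φ x)) (fun x => -Real.cos (φ x))
      (fun x => by simp [Real.sin_sq_add_cos_sq (φ x)]) ?_ ?_ s
    · intro x
      have h := (Real.hasDerivAt_sin (φ x)).comp x (hphider ha ha' x)
      refine h.congr_deriv ?_; symm
      ring
    · intro x
      have h := ((Real.hasDerivAt_cos (φ x)).comp x (hphider ha ha' x)).neg
      refine h.congr_deriv ?_; symm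
      ring
end
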